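/- With the Springer correspondence data for Sp(2n) in characteristic 2: if β_i = α_i + 2 then λ*_{λ_{2i}+1} is even, and if i ≥ 2 and α_i = β_{i−1} + 2 then λ*_{λ_{2i−1}+1} is odd, where λ* is the conjugate partition of λ. -/

import Mathlib

open Finset

/-- Partial sum `∑_{j=1}^i f j` (one-indexed). -/
def psum (f : ℕ → ℕ) (i : ℕ) : ℕ := ∑ j ∈ Finset.Icc 1 i, f j

/-- Conjugate partition: `conj f j = #{k ≥ 1 : f k ≥ j}`. -/
noncomputable def conj (f : ℕ → ℕ) (j : ℕ) : ℕ := Set.ncard {k : ℕ | 1 ≤ k ∧ j ≤ f k}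

/-- `f` is a partition of `n` (one-indexed, weakly decreasing, eventually zero). -/
def IsPartitionOf (f : ℕ → ℕ) (n : ℕ) : Prop :=
  (∀ i, 1 ≤ i → f (i + 1) ≤ f i) ∧ ∃ N, (∀ i, N < i → f i = 0) ∧ psum f N = n

/-- Weakly decreasing (from index 1 on). -/
def Decr (f : ℕ → ℕ) : Prop := ∀ i, 1 ≤ i → f (i + 1) ≤ f i

/-- `A_i = ∑_{j ≤ i} (α_j + β_j)`. -/
def AA (f g : ℕ → ℕ) (i : ℕ) : ℕ := ∑ j ∈ Finset.Icc 1 i, (f j + g j)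

/-- `B_i = ∑_{j < i} (α_j + β_j) + α_i`. -/
def BB (f g : ℕ → ℕ) (i : ℕ) : ℕ := (∑ j ∈ Finset.Icc 1 (i - 1), (f j + g j)) + f i

/-- Multiplicity of `i` as a part. -/
noncomputable def mult (f : ℕ → ℕ) (i : ℕ) : ℕ := conj f i - conj f (i + 1)

lemma mono_of_decr (f : ℕ → ℕ) (hf : Decr f) :
    ∀ j k, 1 ≤ j → j ≤ k → f k ≤ f j := by
  intro j k hj hjk
  induction k with
  | zero => omega
  | succ n ih =>
    rcases Nat.lt_or_ge n j with h' | h'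
    · have : j = n + 1 := by omega
      rw [this]
    · exact le_trans (hf n (by omega)) (ih h')

lemma interval_char (S : Set ℕ) (hfin : S.Finite)
    (h1 : ∀ k ∈ S, 1 ≤ k)
    (h2 : ∀ j k, 1 ≤ j → j ≤ k → k ∈ S → j ∈ S) :
    ∀ k, k ∈ S ↔ 1 ≤ k ∧ k ≤ S.ncard := by
  intro k
  rcases S.eq_empty_or_nonempty with h | h
  · simp [h]
    omega
  · obtain ⟨m, hmS, hmax⟩ : ∃ m ∈ S, ∀ x ∈ S, id m ≤ id x → id m = id x := by
      obtain ⟨m, hm⟩ := Set.Finite.exists_maximalFor id S hfin h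
      exact ⟨m, hm.1, fun x hx h' => le_antisymm h' (hm.2 hx h')⟩
    have hSeq : S = Set.Icc 1 m := by
      ext x
      constructor
      · intro hx
        refine ⟨h1 x hx, ?_⟩
        rcases le_total x m with h' | h'
        · exact h'
        · exact le_of_eq (hmax x hx h').symm
      · intro hx
        exact h2 x m hx.1 hx.2 hmS
    rw [hSeq, ← Finset.coe_Icc, Set.ncard_coe_finset, Nat.card_Icc, Finset.coe_Icc, Set.mem_Icc]
    omega

lemma conj_char (lam : ℕ → ℕ) (hdec : Decr lam) (M : ℕ) (hM1 : 1 ≤ M) (hM : lam M = 0)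
    (c : ℕ) (hc : 1 ≤ c) :
    ∀ k, (1 ≤ k ∧ c ≤ lam k) ↔ (1 ≤ k ∧ k ≤ conj lam c) := by
  have hml := mono_of_decr lam hdec
  have hsub : {k : ℕ | 1 ≤ k ∧ c ≤ lam k} ⊆ Set.Icc 1 M := by
    intro k hk
    refine ⟨hk.1, ?_⟩
    by_contra h
    have := hml M k hM1 (by omega)
    have := hk.2
    omega
  have hfin : ({k : ℕ | 1 ≤ k ∧ c ≤ lam k}).Finite := (Set.finite_Icc 1 M).subset hsub
  exact interval_char _ hfin (fun k hk => hk.1)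
    (fun j k hj hjk hk => ⟨hj, le_trans hk.2 (hml j k hj hjk)⟩)

/-- parity of `λ*_{λ_{2i}+1}` and `λ*_{λ_{2i−1}+1}` for `Sp(2n)`, char 2. -/
theorem stmt10 (α β : ℕ → ℕ) (δ θ : ℕ → ℤ) (lam : ℕ → ℕ)
    (hα : Decr α) (hβ : Decr β)
    (hz : ∃ N, ∀ i, N < i → α i = 0 ∧ β i = 0)
    (h1 : ∀ i, 1 ≤ i → α (i + 1) ≤ β i + 2) (h2 : ∀ i, 1 ≤ i → β i ≤ α i + 2)
    (hδ : ∀ i, 1 ≤ i → δ i =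
      if β i = α i + 2 then 2 else if β i = α i + 1 then 1 else
      if 2 ≤ i ∧ α i = β (i - 1) + 2 then -2 else
      if 2 ≤ i ∧ α i = β (i - 1) + 1 then -1 else 0)
    (hθ : ∀ i, 1 ≤ i → θ i =
      if β i + 2 = α (i + 1) then 2 else if β i + 1 = α (i + 1) then 1 else
      if β i = α i + 2 then -2 else if β i = α i + 1 then -1 else 0)
    (hlam : ∀ i, 1 ≤ i →
      (lam (2 * i - 1) : ℤ) = 2 * (α i : ℤ) + δ i ∧ (lam (2 * i) : ℤ) = 2 * (β i : ℤ) + θ i)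
    (hdec : Decr lam)
    (i : ℕ) (hi : 1 ≤ i) :
    (β i = α i + 2 → Even (conj lam (lam (2 * i) + 1))) ∧
    (2 ≤ i → α i = β (i - 1) + 2 → Odd (conj lam (lam (2 * i - 1) + 1))) := by
  have hmα := mono_of_decr α hα
  have hmβ := mono_of_decr β hβ
  have hml := mono_of_decr lam hdec
  obtain ⟨N, hN⟩ := hz
  have hMz : lam (2 * (N + 2)) = 0 := by
    have h := (hlam (N + 2) (by omega)).2
    have hθ2 := hθ (N + 2) (by omega)
    have hb2 : β (N + 2) = 0 := (hN _ (by omega)).2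
    have ha2 : α (N + 2) = 0 := (hN _ (by omega)).1
    have ha3 : α (N + 2 + 1) = 0 := (hN _ (by omega)).1
    rw [hb2, ha2, ha3] at hθ2
    norm_num at hθ2
    rw [hb2, hθ2] at h
    omega
  constructor
  · -- Part 1 : β i = α i + 2 ⇒ even
    intro hb
    have hαi1 : α (i + 1) ≤ α i := hα i hi
    have hθiv : θ i = -2 := by
      rw [hθ i hi]; split_ifs <;> omega
    have hδiv : δ i = 2 := by
      rw [hδ i hi]; split_ifs <;> omega
    have hl1 := (hlam i hi).1
    have hl2 := (hlam i hi).2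
    rw [hδiv] at hl1
    rw [hθiv] at hl2
    have hmem := conj_char lam hdec (2 * (N + 2)) (by omega) hMz (lam (2 * i) + 1) (by omega)
    have hub : ¬ (2 * i - 1 ≤ conj lam (lam (2 * i) + 1)) := by
      intro h
      have := ((hmem (2 * i - 1)).mpr ⟨by omega, h⟩).2
      omega
    by_contra hodd
    rw [Nat.not_even_iff_odd] at hodd
    obtain ⟨t, ht⟩ := hodd
    have hin : lam (2 * i) + 1 ≤ lam (2 * t + 1) :=
      ((hmem (2 * t + 1)).mpr ⟨by omega, by omega⟩).2
    have hout : ¬ (lam (2 * i) + 1 ≤ lam (2 * t + 2)) := by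
      intro h
      have := ((hmem (2 * t + 2)).mp ⟨by omega, h⟩).2
      omega
    have hle : lam (2 * i) ≤ lam (2 * t + 2) := hml (2 * t + 2) (2 * i) (by omega) (by omega)
    have hlk := (hlam (t + 1) (by omega)).2
    rw [show 2 * (t + 1) = 2 * t + 2 from by ring] at hlk
    have hβk : β i ≤ β (t + 1) := hmβ (t + 1) i (by omega) (by omega)
    have hθle : θ (t + 1) ≤ -2 := by omega
    have hθk := hθ (t + 1) (by omega)
    have hcase : β (t + 1) = α (t + 1) + 2 := by
      have h' := hθk; split_ifs at h' <;> omega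
    have hθkv : θ (t + 1) = -2 := by
      have h' := hθk; split_ifs at h' <;> omega
    rw [hθkv] at hlk
    have hδk := hδ (t + 1) (by omega)
    have hδkv : δ (t + 1) = 2 := by rw [hδk, if_pos hcase]
    have hlk1 := (hlam (t + 1) (by omega)).1
    rw [show 2 * (t + 1) - 1 = 2 * t + 1 from by omega, hδkv] at hlk1
    omega
  · -- Part 2 : α i = β (i-1) + 2 ⇒ odd
    intro hi2 hb
    have hββ : β i ≤ β (i - 1) := by
      have := hβ (i - 1) (by omega)
      rw [show i - 1 + 1 = i from by omega] at this
      exact this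
    have hδiv : δ i = -2 := by
      rw [hδ i hi]; split_ifs <;> omega
    have hl1 := (hlam i hi).1
    rw [hδiv] at hl1
    have hmem := conj_char lam hdec (2 * (N + 2)) (by omega) hMz (lam (2 * i - 1) + 1) (by omega)
    have hub : ¬ (2 * i - 1 ≤ conj lam (lam (2 * i - 1) + 1)) := by
      intro h
      have := ((hmem (2 * i - 1)).mpr ⟨by omega, h⟩).2
      omega
    -- lower bound: 1 is in S
    have hδ1v : 0 ≤ δ 1 := by
      rw [hδ 1 le_rfl]; split_ifs <;> omega
    have hl1' := (hlam 1 le_rfl).1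
    rw [show 2 * 1 - 1 = 1 from by omega] at hl1'
    have hα1 : α i ≤ α 1 := hmα 1 i le_rfl hi
    have hm1 : 1 ≤ conj lam (lam (2 * i - 1) + 1) :=
      ((hmem 1).mp ⟨le_rfl, by omega⟩).2
    by_contra heven
    rw [Nat.not_odd_iff_even] at heven
    obtain ⟨t, ht⟩ := heven
    have hin : lam (2 * i - 1) + 1 ≤ lam (2 * t) :=
      ((hmem (2 * t)).mpr ⟨by omega, by omega⟩).2
    have hout : ¬ (lam (2 * i - 1) + 1 ≤ lam (2 * t + 1)) := by
      intro h
      have := ((hmem (2 * t + 1)).mp ⟨by omega, h⟩).2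
      omega
    have hle : lam (2 * i - 1) ≤ lam (2 * t + 1) :=
      hml (2 * t + 1) (2 * i - 1) (by omega) (by omega)
    have hlk1 := (hlam (t + 1) (by omega)).1
    rw [show 2 * (t + 1) - 1 = 2 * t + 1 from by omega] at hlk1
    have hαk : α i ≤ α (t + 1) := hmα (t + 1) i (by omega) (by omega)
    have hδle : δ (t + 1) ≤ -2 := by omega
    have hδk := hδ (t + 1) (by omega)
    rw [show t + 1 - 1 = t from rfl] at hδk
    have hcase : α (t + 1) = β t + 2 := by
      have h' := hδk; split_ifs at h' <;> omega
    have hδkv : δ (t + 1) = -2 := by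
      have h' := hδk; split_ifs at h' <;> omega
    rw [hδkv] at hlk1
    have hθt := hθ t (by omega)
    have hθtv : θ t = 2 := by rw [hθt, if_pos (by omega)]
    have hlt := (hlam t (by omega)).2
    rw [hθtv] at hlt
    omega
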